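/- Let λ₀ ∈ [0,8], V̄ > 2, positive integers a, k, k' with k < k' of the same parity. Let S₁ ⊆ R_{[4,a-1],{k'}} and S₂ = {(s,k) : (s,k') ∈ S₁}. Then the restricted transfer operator P_{S₁} M^{k,k'}_{[1,a]} I_{S₂} (the submatrix of the transfer matrix with rows S₁ and columns S₂) is invertible with operator norm bound ‖(P_{S₁} M^{k,k'}_{[1,a]} I_{S₂})^{-1}‖ ≤ a(2V̄(k'-k+2))^{2C₁a}, where C₁ is the constant in the bound on matrix entries of the transfer operator. -/

import Mathlib

/-- The tilted rectangle `R_{[a₁,a₂],[b₁,b₂]}`. -/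
def tiltedRect (a₁ a₂ b₁ b₂ : ℤ) : Set (ℤ × ℤ) :=
  {p | a₁ ≤ p.1 ∧ p.1 ≤ a₂ ∧ b₁ ≤ p.2 ∧ p.2 ≤ b₂ ∧ Even (p.1 - p.2)}

/-- The west boundary `∂ʷR_{[a₁,a₂],[b₁,b₂]}`. -/
def westBoundary (a₁ a₂ b₁ b₂ : ℤ) : Set (ℤ × ℤ) :=
  tiltedRect a₁ a₂ b₁ (b₁ + 1) ∪ tiltedRect a₁ (a₁ + 1) b₁ b₂

section UProps

variable {lam Vbar : ℝ} {V : ℤ × ℤ → ℝ} {a k k' : ℤ} {u : ℤ → ℤ × ℤ → ℝ} {s : ℤ}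

lemma mem_tilted {a₁ a₂ b₁ b₂ σ τ : ℤ} :
    (σ, τ) ∈ tiltedRect a₁ a₂ b₁ b₂ ↔
      a₁ ≤ σ ∧ σ ≤ a₂ ∧ b₁ ≤ τ ∧ τ ≤ b₂ ∧ Even (σ - τ) := Iff.rfl

lemma u_zero
    (hk : 0 < k) (hkk : k < k')
    (hbd : ∀ p ∈ westBoundary 1 a (k - 1) k', u s p = if p = (s, k) then (1:ℝ) else 0)
    (hrec : ∀ σ τ : ℤ, (σ - 1, τ - 1) ∈ tiltedRect 2 (a - 1) k (k' - 1) →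
      u s (σ, τ) = (4 + V (σ - 1, τ - 1) - lam) * u s (σ - 1, τ - 1)
        - u s (σ - 2, τ) - u s (σ - 2, τ - 2) - u s (σ, τ - 2))
    (hs4 : 4 ≤ s) :
    ∀ n : ℕ, ∀ σ τ : ℤ, (σ, τ) ∈ tiltedRect 1 a (k - 1) k' → σ + τ ≤ n → σ < s →
      u s (σ, τ) = 0 := by
  intro n
  induction n using Nat.strong_induction_on with
  | _ n ih =>
    intro σ τ hmem hn hσs
    obtain ⟨h1, h2, h3, h4, m, hm⟩ := (mem_tilted).mp hmem
    by_cases hτ : τ ≤ k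
    · have hb : (σ, τ) ∈ westBoundary 1 a (k - 1) k' := by
        left
        exact mem_tilted.mpr ⟨h1, h2, h3, by omega, ⟨m, hm⟩⟩
      rw [hbd _ hb, if_neg]
      intro hc
      rw [Prod.mk.injEq] at hc
      omega
    · by_cases hσ2 : σ ≤ 2
      · have hb : (σ, τ) ∈ westBoundary 1 a (k - 1) k' := by
          right
          exact mem_tilted.mpr ⟨h1, by omega, h3, h4, ⟨m, hm⟩⟩
        rw [hbd _ hb, if_neg]
        intro hc
        rw [Prod.mk.injEq] at hc
        omega
      · have hint : (σ - 1, τ - 1) ∈ tiltedRect 2 (a - 1) k (k' - 1) :=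
          mem_tilted.mpr ⟨by omega, by omega, by omega, by omega, ⟨m, by omega⟩⟩
        have hn1 : 1 ≤ n := by omega
        have hcast : ((n - 1 : ℕ) : ℤ) = (n : ℤ) - 1 := by omega
        have hlt : n - 1 < n := by omega
        have z1 : u s (σ - 1, τ - 1) = 0 := by
          apply ih (n-1) hlt _ _
            (mem_tilted.mpr ⟨by omega, by omega, by omega, by omega, ⟨m, by omega⟩⟩)
            (by omega) (by omega)
        have z2 : u s (σ - 2, τ) = 0 := by
          apply ih (n-1) hlt _ _
            (mem_tilted.mpr ⟨by omega, by omega, by omega, by omega, ⟨m - 1, by omega⟩⟩)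
            (by omega) (by omega)
        have z3 : u s (σ - 2, τ - 2) = 0 := by
          apply ih (n-1) hlt _ _
            (mem_tilted.mpr ⟨by omega, by omega, by omega, by omega, ⟨m, by omega⟩⟩)
            (by omega) (by omega)
        have z4 : u s (σ, τ - 2) = 0 := by
          apply ih (n-1) hlt _ _
            (mem_tilted.mpr ⟨by omega, by omega, by omega, by omega, ⟨m + 1, by omega⟩⟩)
            (by omega) (by omega)
        rw [hrec σ τ hint, z1, z2, z3, z4]
        ring

end UProps

section UProps2

variable {lam Vbar : ℝ} {V : ℤ × ℤ → ℝ} {a k k' : ℤ} {u : ℤ → ℤ × ℤ → ℝ} {s : ℤ}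

lemma u_diag
    (hk : 0 < k) (hkk : k < k')
    (hbd : ∀ p ∈ westBoundary 1 a (k - 1) k', u s p = if p = (s, k) then (1:ℝ) else 0)
    (hrec : ∀ σ τ : ℤ, (σ - 1, τ - 1) ∈ tiltedRect 2 (a - 1) k (k' - 1) →
      u s (σ, τ) = (4 + V (σ - 1, τ - 1) - lam) * u s (σ - 1, τ - 1)
        - u s (σ - 2, τ) - u s (σ - 2, τ - 2) - u s (σ, τ - 2))
    (hs4 : 4 ≤ s) (hsa : s ≤ a - 1) (hsk : Even (s - k)) :
    ∀ n : ℕ, ∀ τ : ℤ, k ≤ τ → τ ≤ k' → Even (τ - k) → (τ - k).toNat ≤ n →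
      |u s (s, τ)| = 1 := by
  obtain ⟨ms, hms⟩ := hsk
  intro n
  induction n using Nat.strong_induction_on with
  | _ n ih =>
    intro τ hτ1 hτ2 hτe hτn
    obtain ⟨mt, hmt⟩ := hτe
    by_cases hτk : τ ≤ k
    · have hb : (s, k) ∈ westBoundary 1 a (k - 1) k' := by
        left
        exact mem_tilted.mpr ⟨by omega, by omega, by omega, by omega, ⟨ms, by omega⟩⟩
      have : τ = k := by omega
      rw [this, hbd _ hb, if_pos rfl]
      simp
    · -- τ ≥ k + 2
      have hτ3 : k + 2 ≤ τ := by omega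
      have hint : (s - 1, τ - 1) ∈ tiltedRect 2 (a - 1) k (k' - 1) :=
        mem_tilted.mpr ⟨by omega, by omega, by omega, by omega, ⟨ms - mt, by omega⟩⟩
      have z1 : u s (s - 1, τ - 1) = 0 := by
        apply u_zero hk hkk hbd hrec hs4 (s - 1 + (τ - 1)).toNat _ _
          (mem_tilted.mpr ⟨by omega, by omega, by omega, by omega, ⟨ms - mt, by omega⟩⟩)
          (Int.self_le_toNat _) (by omega)
      have z2 : u s (s - 2, τ) = 0 := by
        apply u_zero hk hkk hbd hrec hs4 (s - 2 + τ).toNat _ _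
          (mem_tilted.mpr ⟨by omega, by omega, by omega, by omega, ⟨ms - mt - 1, by omega⟩⟩)
          (Int.self_le_toNat _) (by omega)
      have z3 : u s (s - 2, τ - 2) = 0 := by
        apply u_zero hk hkk hbd hrec hs4 (s - 2 + (τ - 2)).toNat _ _
          (mem_tilted.mpr ⟨by omega, by omega, by omega, by omega, ⟨ms - mt, by omega⟩⟩)
          (Int.self_le_toNat _) (by omega)
      have hstep : u s (s, τ) = -u s (s, τ - 2) := by
        rw [hrec s τ hint, z1, z2, z3]; ring
      rw [hstep, abs_neg]
      exact ih (n - 1) (by omega) (τ - 2) (by omega) (by omega) ⟨mt - 1, by omega⟩ (by omega)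

end UProps2

section UProps3

variable {lam Vbar : ℝ} {V : ℤ × ℤ → ℝ} {a k k' : ℤ} {u : ℤ → ℤ × ℤ → ℝ} {s : ℤ}

set_option maxHeartbeats 2000000 in
lemma u_growth
    (hlam0 : 0 ≤ lam) (hlam8 : lam ≤ 8) (hV2 : 2 < Vbar)
    (hVor : ∀ p, V p = 0 ∨ V p = Vbar)
    (hk : 0 < k) (hkk : k < k')
    (hbd : ∀ p ∈ westBoundary 1 a (k - 1) k', u s p = if p = (s, k) then (1:ℝ) else 0)
    (hrec : ∀ σ τ : ℤ, (σ - 1, τ - 1) ∈ tiltedRect 2 (a - 1) k (k' - 1) →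
      u s (σ, τ) = (4 + V (σ - 1, τ - 1) - lam) * u s (σ - 1, τ - 1)
        - u s (σ - 2, τ) - u s (σ - 2, τ - 2) - u s (σ, τ - 2))
    (hs4 : 4 ≤ s) (hsa : s ≤ a - 1) (hsk : Even (s - k)) :
    ∀ n : ℕ, ∀ σ τ : ℤ, (σ, τ) ∈ tiltedRect 1 a (k - 1) k' → σ + τ ≤ n → s ≤ σ →
      |u s (σ, τ)| ≤ (3 * Vbar * ((τ : ℝ) - (k : ℝ) + 2)) ^ (2 * (σ - s)).toNat := by
  obtain ⟨ms, hms⟩ := hsk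
  intro n
  induction n using Nat.strong_induction_on with
  | _ n ih =>
    intro σ τ hmem hn hsσ
    obtain ⟨h1, h2, h3, h4, m, hm⟩ := (mem_tilted).mp hmem
    have htR : (1 : ℝ) ≤ (τ : ℝ) - (k : ℝ) + 2 := by
      have : ((k : ℝ) - 1) ≤ (τ : ℝ) := by exact_mod_cast h3
      linarith
    have hX1 : (1 : ℝ) ≤ 3 * Vbar * ((τ : ℝ) - (k : ℝ) + 2) := by nlinarith
    by_cases hτk : τ ≤ k
    · -- boundary row
      have hb : (σ, τ) ∈ westBoundary 1 a (k - 1) k' := by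
        left; exact mem_tilted.mpr ⟨h1, h2, h3, by omega, ⟨m, hm⟩⟩
      rw [hbd _ hb]
      by_cases hc : ((σ : ℤ), τ) = ((s : ℤ), k)
      · rw [if_pos hc]
        rw [Prod.mk.injEq] at hc
        have : (2 * (σ - s)).toNat = 0 := by omega
        rw [this, pow_zero]
        simp
      · rw [if_neg hc]
        simp only [abs_zero]
        positivity
    · -- interior
      have hτ1 : k + 1 ≤ τ := by omega
      have hint : (σ - 1, τ - 1) ∈ tiltedRect 2 (a - 1) k (k' - 1) :=
        mem_tilted.mpr ⟨by omega, by omega, by omega, by omega, ⟨m, by omega⟩⟩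
      have hA0 : |4 + V (σ - 1, τ - 1) - lam| ≤ 3 * Vbar := by
        rcases hVor (σ - 1, τ - 1) with hV0 | hV0 <;> rw [hV0] <;>
          (rw [abs_le]; constructor <;> linarith)
      have hn1 : 1 ≤ n := by omega
      have hrw := hrec σ τ hint
      rcases eq_or_lt_of_le hsσ with hσs | hσs1
      · -- σ = s
        have z1 : u s (σ - 1, τ - 1) = 0 := by
          apply u_zero hk hkk hbd hrec hs4 (σ - 1 + (τ - 1)).toNat _ _
            (mem_tilted.mpr ⟨by omega, by omega, by omega, by omega, ⟨m, by omega⟩⟩)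
            (Int.self_le_toNat _) (by omega)
        have z2 : u s (σ - 2, τ) = 0 := by
          apply u_zero hk hkk hbd hrec hs4 (σ - 2 + τ).toNat _ _
            (mem_tilted.mpr ⟨by omega, by omega, by omega, by omega, ⟨m - 1, by omega⟩⟩)
            (Int.self_le_toNat _) (by omega)
        have z3 : u s (σ - 2, τ - 2) = 0 := by
          apply u_zero hk hkk hbd hrec hs4 (σ - 2 + (τ - 2)).toNat _ _
            (mem_tilted.mpr ⟨by omega, by omega, by omega, by omega, ⟨m, by omega⟩⟩)
            (Int.self_le_toNat _) (by omega)
        have hb4 : |u s (σ, τ - 2)| ≤ (3 * Vbar * ((τ - 2 : ℤ) - (k : ℝ) + 2)) ^ (2 * (σ - s)).toNat := by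
          have := ih (n - 1) (by omega) σ (τ - 2)
            (mem_tilted.mpr ⟨by omega, by omega, by omega, by omega, ⟨m + 1, by omega⟩⟩)
            (by omega) hsσ
          convert this using 3
          all_goals (push_cast; ring)
        have he0 : (2 * (σ - s)).toNat = 0 := by omega
        rw [hrw, z1, z2, z3, he0]
        rw [he0] at hb4
        simp only [pow_zero] at hb4 ⊢
        calc |(4 + V (σ - 1, τ - 1) - lam) * 0 - 0 - 0 - u s (σ, τ - 2)| = |u s (σ, τ - 2)| := by
              rw [show (4 + V (σ - 1, τ - 1) - lam) * 0 - 0 - 0 - u s (σ, τ - 2) = -u s (σ, τ - 2) by ring, abs_neg]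
        _ ≤ 1 := hb4
      · rcases eq_or_lt_of_le (by omega : s + 1 ≤ σ) with hσs2 | hσs2
        · -- σ = s + 1
          have z2 : u s (σ - 2, τ) = 0 := by
            apply u_zero hk hkk hbd hrec hs4 (σ - 2 + τ).toNat _ _
              (mem_tilted.mpr ⟨by omega, by omega, by omega, by omega, ⟨m - 1, by omega⟩⟩)
              (Int.self_le_toNat _) (by omega)
          have z3 : u s (σ - 2, τ - 2) = 0 := by
            apply u_zero hk hkk hbd hrec hs4 (σ - 2 + (τ - 2)).toNat _ _
              (mem_tilted.mpr ⟨by omega, by omega, by omega, by omega, ⟨m, by omega⟩⟩)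
              (Int.self_le_toNat _) (by omega)
          have hb1 : |u s (σ - 1, τ - 1)| ≤ 1 := by
            have := ih (n - 1) (by omega) (σ - 1) (τ - 1)
              (mem_tilted.mpr ⟨by omega, by omega, by omega, by omega, ⟨m, by omega⟩⟩)
              (by omega) (by omega)
            have he0 : (2 * (σ - 1 - s)).toNat = 0 := by omega
            rw [he0, pow_zero] at this
            exact this
          have hb4 : |u s (σ, τ - 2)| ≤ (3 * Vbar * (((τ : ℝ) - 2) - (k : ℝ) + 2)) ^ 2 := by
            have := ih (n - 1) (by omega) σ (τ - 2)
              (mem_tilted.mpr ⟨by omega, by omega, by omega, by omega, ⟨m + 1, by omega⟩⟩)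
              (by omega) (by omega)
            have he2 : (2 * (σ - s)).toNat = 2 := by omega
            rw [he2] at this
            convert this using 3
            all_goals (push_cast; ring)
          have he2 : (2 * (σ - s)).toNat = 2 := by omega
          rw [hrw, z2, z3, he2]
          set t : ℝ := (τ : ℝ) - (k : ℝ) + 2 with ht
          have ht3 : (3 : ℝ) ≤ t := by
            have : ((k : ℝ) + 1) ≤ (τ : ℝ) := by exact_mod_cast hτ1
            rw [ht]; linarith
          calc |(4 + V (σ - 1, τ - 1) - lam) * u s (σ - 1, τ - 1) - 0 - 0 - u s (σ, τ - 2)|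
              ≤ |4 + V (σ - 1, τ - 1) - lam| * |u s (σ - 1, τ - 1)| + |u s (σ, τ - 2)| := by
                rw [show (4 + V (σ - 1, τ - 1) - lam) * u s (σ - 1, τ - 1) - 0 - 0 - u s (σ, τ - 2)
                  = (4 + V (σ - 1, τ - 1) - lam) * u s (σ - 1, τ - 1) - u s (σ, τ - 2) by ring]
                calc |(4 + V (σ - 1, τ - 1) - lam) * u s (σ - 1, τ - 1) - u s (σ, τ - 2)|
                    ≤ |(4 + V (σ - 1, τ - 1) - lam) * u s (σ - 1, τ - 1)| + |u s (σ, τ - 2)| :=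
                      abs_sub _ _
                _ = |4 + V (σ - 1, τ - 1) - lam| * |u s (σ - 1, τ - 1)| + |u s (σ, τ - 2)| := by
                      rw [abs_mul]
          _ ≤ 3 * Vbar * 1 + (3 * Vbar * (t - 2)) ^ 2 := by
                have h1' : |4 + V (σ - 1, τ - 1) - lam| * |u s (σ - 1, τ - 1)| ≤ 3 * Vbar * 1 :=
                  mul_le_mul hA0 hb1 (abs_nonneg _) (by linarith)
                have h2' : |u s (σ, τ - 2)| ≤ (3 * Vbar * (t - 2)) ^ 2 := by
                  convert hb4 using 3
                  all_goals (rw [ht]; ring)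
                linarith
          _ ≤ (3 * Vbar * t) ^ 2 := by
                nlinarith [mul_nonneg (mul_nonneg (by linarith : (0:ℝ) ≤ Vbar) (by linarith : (0:ℝ) ≤ Vbar)) (by linarith : (0:ℝ) ≤ t - 3),
                  mul_nonneg (by linarith : (0:ℝ) ≤ Vbar - 2) (by linarith : (0:ℝ) ≤ Vbar)]
        · -- σ ≥ s + 2
          set t : ℝ := (τ : ℝ) - (k : ℝ) + 2 with ht
          have ht3 : (3 : ℝ) ≤ t := by
            have : ((k : ℝ) + 1) ≤ (τ : ℝ) := by exact_mod_cast hτ1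
            rw [ht]; linarith
          set x : ℝ := 3 * Vbar * t with hx
          have hx0 : (1 : ℝ) ≤ x := by nlinarith
          have hx2 : (0 : ℝ) ≤ 3 * Vbar * (t - 2) := by nlinarith
          have hx1 : (0 : ℝ) ≤ 3 * Vbar * (t - 1) := by nlinarith
          have hx2x : 3 * Vbar * (t - 2) ≤ x := by rw [hx]; nlinarith
          have hx1x : 3 * Vbar * (t - 1) ≤ x := by rw [hx]; nlinarith
          set e2 : ℕ := (2 * (σ - 2 - s)).toNat with he2
          have hee1 : (2 * (σ - 1 - s)).toNat = e2 + 2 := by omega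
          have hee : (2 * (σ - s)).toNat = e2 + 4 := by omega
          have hb1 : |u s (σ - 1, τ - 1)| ≤ (3 * Vbar * (t - 1)) ^ (e2 + 2) := by
            have := ih (n - 1) (by omega) (σ - 1) (τ - 1)
              (mem_tilted.mpr ⟨by omega, by omega, by omega, by omega, ⟨m, by omega⟩⟩)
              (by omega) (by omega)
            rw [hee1] at this
            convert this using 3
            all_goals (push_cast [ht]; ring)
          have hb2 : |u s (σ - 2, τ)| ≤ x ^ e2 := by
            have := ih (n - 1) (by omega) (σ - 2) τ
              (mem_tilted.mpr ⟨by omega, by omega, by omega, by omega, ⟨m - 1, by omega⟩⟩)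
              (by omega) (by omega)
            exact this
          have hb3 : |u s (σ - 2, τ - 2)| ≤ (3 * Vbar * (t - 2)) ^ e2 := by
            have := ih (n - 1) (by omega) (σ - 2) (τ - 2)
              (mem_tilted.mpr ⟨by omega, by omega, by omega, by omega, ⟨m, by omega⟩⟩)
              (by omega) (by omega)
            convert this using 3
            all_goals (push_cast [ht]; ring)
          have hb4 : |u s (σ, τ - 2)| ≤ (3 * Vbar * (t - 2)) ^ (e2 + 4) := by
            have := ih (n - 1) (by omega) σ (τ - 2)
              (mem_tilted.mpr ⟨by omega, by omega, by omega, by omega, ⟨m + 1, by omega⟩⟩)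
              (by omega) (by omega)
            rw [hee] at this
            convert this using 3
            all_goals (push_cast [ht]; ring)
          rw [hrw, hee]
          have step1 : |(4 + V (σ - 1, τ - 1) - lam) * u s (σ - 1, τ - 1) - u s (σ - 2, τ)
              - u s (σ - 2, τ - 2) - u s (σ, τ - 2)|
              ≤ |4 + V (σ - 1, τ - 1) - lam| * |u s (σ - 1, τ - 1)| + |u s (σ - 2, τ)|
                + |u s (σ - 2, τ - 2)| + |u s (σ, τ - 2)| := by
            calc _ ≤ |(4 + V (σ - 1, τ - 1) - lam) * u s (σ - 1, τ - 1) - u s (σ - 2, τ)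
                - u s (σ - 2, τ - 2)| + |u s (σ, τ - 2)| := abs_sub _ _
            _ ≤ |(4 + V (σ - 1, τ - 1) - lam) * u s (σ - 1, τ - 1) - u s (σ - 2, τ)|
                + |u s (σ - 2, τ - 2)| + |u s (σ, τ - 2)| := by
                  have := abs_sub ((4 + V (σ - 1, τ - 1) - lam) * u s (σ - 1, τ - 1)
                    - u s (σ - 2, τ)) (u s (σ - 2, τ - 2))
                  linarith
            _ ≤ |4 + V (σ - 1, τ - 1) - lam| * |u s (σ - 1, τ - 1)| + |u s (σ - 2, τ)|
                + |u s (σ - 2, τ - 2)| + |u s (σ, τ - 2)| := by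
                  have h' := abs_sub ((4 + V (σ - 1, τ - 1) - lam) * u s (σ - 1, τ - 1))
                    (u s (σ - 2, τ))
                  rw [abs_mul] at h'
                  linarith
          have key : |4 + V (σ - 1, τ - 1) - lam| * |u s (σ - 1, τ - 1)| + |u s (σ - 2, τ)|
                + |u s (σ - 2, τ - 2)| + |u s (σ, τ - 2)| ≤ x ^ (e2 + 4) := by
            have c1 : |4 + V (σ - 1, τ - 1) - lam| * |u s (σ - 1, τ - 1)|
                ≤ 3 * Vbar * x ^ (e2 + 2) := by
              have hle : (3 * Vbar * (t - 1)) ^ (e2 + 2) ≤ x ^ (e2 + 2) :=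
                pow_le_pow_left₀ hx1 hx1x _
              calc |4 + V (σ - 1, τ - 1) - lam| * |u s (σ - 1, τ - 1)|
                  ≤ (3 * Vbar) * ((3 * Vbar * (t - 1)) ^ (e2 + 2)) :=
                    mul_le_mul hA0 hb1 (abs_nonneg _) (by linarith)
              _ ≤ 3 * Vbar * x ^ (e2 + 2) := by
                    apply mul_le_mul_of_nonneg_left hle (by linarith)
            have c3 : |u s (σ - 2, τ - 2)| ≤ x ^ e2 :=
              le_trans hb3 (pow_le_pow_left₀ hx2 hx2x _)
            have c4 : |u s (σ, τ - 2)| ≤ (3 * Vbar * (t - 2)) ^ 4 * x ^ e2 := by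
              calc |u s (σ, τ - 2)| ≤ (3 * Vbar * (t - 2)) ^ (e2 + 4) := hb4
              _ = (3 * Vbar * (t - 2)) ^ 4 * (3 * Vbar * (t - 2)) ^ e2 := by
                    rw [← pow_add]; ring_nf
              _ ≤ (3 * Vbar * (t - 2)) ^ 4 * x ^ e2 := by
                    apply mul_le_mul_of_nonneg_left (pow_le_pow_left₀ hx2 hx2x _) (by positivity)
            have hineq : 3 * Vbar * x ^ 2 + 2 + (3 * Vbar * (t - 2)) ^ 4 ≤ x ^ 4 := by
              have e1 : t ^ 4 - (t - 2) ^ 4 ≥ t ^ 2 + 1 := by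
                nlinarith [mul_nonneg (by linarith : (0:ℝ) ≤ t - 3) (sq_nonneg t)]
              have hV0 : (0:ℝ) < Vbar := by linarith
              have ha1 : 81*Vbar^4*(t^2+1) ≤ 81*Vbar^4*(t^4 - (t-2)^4) := by
                have hp : (0:ℝ) ≤ 81*Vbar^4 := by positivity
                exact mul_le_mul_of_nonneg_left e1 hp
              have hb1' : 27*Vbar^3*t^2 + 2 ≤ 81*Vbar^4*t^2 + 81*Vbar^4 := by
                have hc1 : (0:ℝ) ≤ (Vbar - 2) * Vbar^3 * t^2 := mul_nonneg (mul_nonneg (by linarith : (0:ℝ) ≤ Vbar - 2) (by positivity)) (sq_nonneg t)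
                have hc2 : (2:ℝ)^4 ≤ Vbar^4 := pow_le_pow_left₀ (by norm_num) (by linarith) 4
                have hc3 : (0:ℝ) ≤ Vbar^3 * t^2 := by positivity
                nlinarith [hc1, hc2, hc3]
              rw [hx]
              nlinarith [ha1, hb1']
            have hfinal : 3 * Vbar * x ^ (e2 + 2) + x ^ e2 + x ^ e2
                + (3 * Vbar * (t - 2)) ^ 4 * x ^ e2 ≤ x ^ (e2 + 4) := by
              have hxe : (0:ℝ) ≤ x ^ e2 := by positivity
              have expand : x ^ (e2 + 2) = x ^ e2 * x ^ 2 := by rw [pow_add]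
              have expand4 : x ^ (e2 + 4) = x ^ e2 * x ^ 4 := by rw [pow_add]
              rw [expand, expand4]
              nlinarith [mul_le_mul_of_nonneg_left hineq hxe]
            linarith [c1, c3, c4, hb2]
          calc |(4 + V (σ - 1, τ - 1) - lam) * u s (σ - 1, τ - 1) - u s (σ - 2, τ)
              - u s (σ - 2, τ - 2) - u s (σ, τ - 2)| ≤ _ := step1
          _ ≤ x ^ (e2 + 4) := key

end UProps3

lemma geom_two_sum (n : ℕ) : ∑ t ∈ Finset.range n, (2:ℝ)^t = 2^n - 1 := by
  induction n with
  | zero => simp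
  | succ n ih => rw [Finset.sum_range_succ, ih]; ring

open Finset in
lemma tri_inv_bound {d : ℕ} (A : Matrix (Fin d) (Fin d) ℝ) (K : ℝ) (hK : 1 ≤ K)
    (w : Fin d → ℤ) (hw : Monotone w)
    (h0 : ∀ p q : Fin d, p < q → A p q = 0)
    (h1 : ∀ p, |A p p| = 1)
    (h2 : ∀ p q : Fin d, q < p → |A p q| ≤ K ^ (w p - w q).toNat) :
    A.det ≠ 0 ∧
      ∀ p q : Fin d, |A⁻¹ p q| ≤ K ^ (w p - w q).toNat * 2 ^ (p.val - q.val) := by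
  have hK0 : (0:ℝ) < K := lt_of_lt_of_le one_pos hK
  have hdet : A.det ≠ 0 := by
    have htri : A.BlockTriangular OrderDual.toDual := fun p q hpq => h0 p q hpq
    rw [Matrix.det_of_lowerTriangular A htri]
    have habs : |∏ p, A p p| = 1 := by rw [Finset.abs_prod]; simp [h1]
    intro hc; rw [hc] at habs; simp at habs
  refine ⟨hdet, ?_⟩
  have hABone : A * A⁻¹ = 1 := Matrix.mul_nonsing_inv A (isUnit_iff_ne_zero.mpr hdet)
  set B := A⁻¹ with hB
  have hApp : ∀ p, A p p ≠ 0 := by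
    intro p hc
    have := h1 p; rw [hc, abs_zero] at this; norm_num at this
  have key : ∀ n (p q : Fin d), p.val = n →
      (p < q → B p q = 0) ∧ |B p q| ≤ K ^ (w p - w q).toNat * 2 ^ (p.val - q.val) := by
    intro n
    induction n using Nat.strong_induction_on with
    | _ n ih =>
      intro p q hp
      have hsum : ∑ l, A p l * B l q = (1 : Matrix (Fin d) (Fin d) ℝ) p q := by
        rw [← Matrix.mul_apply, hABone]
      have hsplit : A p p * B p q + ∑ l ∈ univ.erase p, A p l * B l q
          = (1 : Matrix (Fin d) (Fin d) ℝ) p q := by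
        rw [← hsum]
        exact (Finset.add_sum_erase univ (fun l => A p l * B l q) (mem_univ p))
      have hres : ∑ l ∈ univ.erase p, A p l * B l q
          = ∑ l ∈ Finset.Ico q p, A p l * B l q := by
        symm
        apply Finset.sum_subset
        · intro l hl
          rw [Finset.mem_Ico] at hl
          simp [Finset.mem_erase, ne_of_lt hl.2]
        · intro l hl hlf
          simp only [mem_erase, mem_univ, and_true] at hl
          rw [Finset.mem_Ico, not_and_or, not_le, not_lt] at hlf
          rcases lt_trichotomy l p with h | h | h
          · have hlq : l < q := by
              rcases hlf with h' | h'
              · exact h'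
              · exact absurd h' (not_le_of_gt h)
            rw [(ih l.val (hp ▸ (show l.val < p.val from h)) l q rfl).1 hlq, mul_zero]
          · exact absurd h hl
          · rw [h0 p l h, zero_mul]
      have hmain : A p p * B p q =
          (1 : Matrix (Fin d) (Fin d) ℝ) p q - ∑ l ∈ Finset.Ico q p, A p l * B l q := by
        rw [← hres]; linarith [hsplit]
      have hz : p < q → B p q = 0 := by
        intro hpq
        have h1q : (1 : Matrix (Fin d) (Fin d) ℝ) p q = 0 :=
          Matrix.one_apply_ne (ne_of_lt hpq)
        have hzero : ∑ l ∈ Finset.Ico q p, A p l * B l q = 0 := by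
          rw [Finset.Ico_eq_empty (not_lt.mpr hpq.le), Finset.sum_empty]
        have : A p p * B p q = 0 := by rw [hmain, h1q, hzero]; ring
        exact (mul_eq_zero.mp this).resolve_left (hApp p)
      refine ⟨hz, ?_⟩
      rcases lt_trichotomy p q with hpq | rfl | hpq
      · rw [hz hpq, abs_zero]; positivity
      · -- diagonal
        have hzero : ∑ l ∈ Finset.Ico p p, A p l * B l p = 0 := by
          rw [Finset.Ico_self, Finset.sum_empty]
        have hd : A p p * B p p = 1 := by
          rw [hmain, hzero, Matrix.one_apply_eq]; ring
        have : |A p p| * |B p p| = 1 := by rw [← abs_mul, hd, abs_one]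
        rw [h1 p, one_mul] at this
        simp [this]
      · -- q < p
        have h1q : (1 : Matrix (Fin d) (Fin d) ℝ) p q = 0 :=
          Matrix.one_apply_ne (ne_of_gt hpq)
        have habs : |B p q| = |∑ l ∈ Finset.Ico q p, A p l * B l q| := by
          have : |A p p * B p q| = |∑ l ∈ Finset.Ico q p, A p l * B l q| := by
            rw [hmain, h1q]; rw [zero_sub, abs_neg]
          rwa [abs_mul, h1 p, one_mul] at this
        set E : ℕ := (w p - w q).toNat with hE
        have hterm : ∀ l ∈ Finset.Ico q p,
            |A p l * B l q| ≤ K ^ E * 2 ^ (l.val - q.val) := by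
          intro l hl
          rw [Finset.mem_Ico] at hl
          have hAl : |A p l| ≤ K ^ (w p - w l).toNat := h2 p l hl.2
          have hBl : |B l q| ≤ K ^ (w l - w q).toNat * 2 ^ (l.val - q.val) :=
            (ih l.val (hp ▸ (show l.val < p.val from hl.2)) l q rfl).2
          have hwl : 0 ≤ w p - w l := sub_nonneg.mpr (hw hl.2.le)
          have hwq : 0 ≤ w l - w q := sub_nonneg.mpr (hw hl.1)
          have hEadd : (w p - w l).toNat + (w l - w q).toNat = E := by
            have hsplit2 : (w p - w l) + (w l - w q) = w p - w q := by ring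
            rw [hE, ← hsplit2, Int.toNat_add hwl hwq]
          calc |A p l * B l q| = |A p l| * |B l q| := abs_mul _ _
          _ ≤ K ^ (w p - w l).toNat * (K ^ (w l - w q).toNat * 2 ^ (l.val - q.val)) := by
              apply mul_le_mul hAl hBl (abs_nonneg _) (by positivity)
          _ = K ^ ((w p - w l).toNat + (w l - w q).toNat) * 2 ^ (l.val - q.val) := by
              rw [pow_add]; ring
          _ = K ^ E * 2 ^ (l.val - q.val) := by rw [hEadd]
        have hgeom : ∑ l ∈ Finset.Ico q p, (2:ℝ) ^ (l.val - q.val)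
            = 2 ^ (p.val - q.val) - 1 := by
          have hmap : ∑ l ∈ Finset.Ico q p, (2:ℝ) ^ (l.val - q.val)
              = ∑ t ∈ Finset.Ico q.val p.val, (2:ℝ) ^ (t - q.val) := by
            rw [← Fin.map_valEmbedding_Ico, Finset.sum_map]
            rfl
          rw [hmap, Finset.sum_Ico_eq_sum_range]
          have : ∀ i ∈ Finset.range (p.val - q.val), (2:ℝ) ^ (q.val + i - q.val) = 2 ^ i := by
            intro i _; congr 1; omega
          rw [Finset.sum_congr rfl this, geom_two_sum]
        calc |B p q| = |∑ l ∈ Finset.Ico q p, A p l * B l q| := habs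
        _ ≤ ∑ l ∈ Finset.Ico q p, |A p l * B l q| := Finset.abs_sum_le_sum_abs _ _
        _ ≤ ∑ l ∈ Finset.Ico q p, K ^ E * 2 ^ (l.val - q.val) := Finset.sum_le_sum hterm
        _ = K ^ E * (2 ^ (p.val - q.val) - 1) := by rw [← Finset.mul_sum, hgeom]
        _ ≤ K ^ E * 2 ^ (p.val - q.val) := by
            apply mul_le_mul_of_nonneg_left _ (by positivity)
            linarith
  exact fun p q => (key p.val p q rfl).2

open Finset in
lemma opNorm_le_of_entries {n : Type*} [Fintype n] [DecidableEq n] (A : Matrix n n ℝ) (c : ℝ)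
    (hc : 0 ≤ c) (h : ∀ i j, |A i j| ≤ c) :
    ‖Matrix.toEuclideanCLM (𝕜 := ℝ) A‖ ≤ (Fintype.card n) * c := by
  apply ContinuousLinearMap.opNorm_le_bound _ (by positivity)
  intro x
  set y := Matrix.toEuclideanCLM (𝕜 := ℝ) A x with hy
  have hyi : ∀ i, y i = ∑ j, A i j * x j := by
    intro i
    have := congrFun (Matrix.ofLp_toEuclideanCLM A x) i
    exact this
  set d : ℕ := Fintype.card n with hd
  set S : ℝ := ∑ j, |x j| with hS
  have hS0 : 0 ≤ S := Finset.sum_nonneg fun j _ => abs_nonneg _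
  have hxj : ∀ j, |x j| ^ 2 = ‖x j‖ ^ 2 := fun j => by rw [Real.norm_eq_abs]
  have hSx : S ≤ Real.sqrt d * ‖x‖ := by
    have h1 : S ^ 2 ≤ d * ‖x‖ ^ 2 := by
      have := sq_sum_le_card_mul_sum_sq (s := (univ : Finset n)) (f := fun j => |x j|)
      rw [EuclideanSpace.norm_eq]
      rw [Real.sq_sqrt (by positivity)]
      simpa [hS, sq_abs, hxj] using this
    have h2 : Real.sqrt (S ^ 2) ≤ Real.sqrt (d * ‖x‖ ^ 2) := Real.sqrt_le_sqrt h1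
    rwa [Real.sqrt_sq hS0, Real.sqrt_mul (by positivity), Real.sqrt_sq (norm_nonneg _)] at h2
  have hyb : ∀ i, ‖y i‖ ≤ c * S := by
    intro i
    rw [hyi i, Real.norm_eq_abs]
    calc |∑ j, A i j * x j| ≤ ∑ j, |A i j * x j| := Finset.abs_sum_le_sum_abs _ _
    _ ≤ ∑ j, c * |x j| := by
        apply Finset.sum_le_sum
        intro j _
        rw [abs_mul]
        exact mul_le_mul_of_nonneg_right (h i j) (abs_nonneg _)
    _ = c * S := by rw [hS, Finset.mul_sum]
  have hyn : ‖y‖ ≤ Real.sqrt d * (c * S) := by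
    rw [EuclideanSpace.norm_eq]
    have h1 : ∑ i, ‖y i‖ ^ 2 ≤ ∑ _i : n, (c * S) ^ 2 := by
      apply Finset.sum_le_sum
      intro i _
      exact pow_le_pow_left₀ (norm_nonneg _) (hyb i) 2
    have h2 : (∑ _i : n, (c * S) ^ 2) = d * (c * S) ^ 2 := by
      simp [hd, Finset.sum_const, nsmul_eq_mul]
    calc Real.sqrt (∑ i, ‖y i‖ ^ 2) ≤ Real.sqrt (d * (c * S) ^ 2) := by
          apply Real.sqrt_le_sqrt; rw [← h2]; exact h1
    _ = Real.sqrt d * (c * S) := by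
          rw [Real.sqrt_mul (by positivity), Real.sqrt_sq (by positivity)]
  calc ‖y‖ ≤ Real.sqrt d * (c * S) := hyn
  _ ≤ Real.sqrt d * (c * (Real.sqrt d * ‖x‖)) := by
      apply mul_le_mul_of_nonneg_left _ (Real.sqrt_nonneg _)
      exact mul_le_mul_of_nonneg_left hSx hc
  _ = (Real.sqrt d * Real.sqrt d) * c * ‖x‖ := by ring
  _ = d * c * ‖x‖ := by rw [Real.mul_self_sqrt (by positivity)]


/-- Inverse bound for restricted transfer operators: there is a
constant `C₁` (the constant in the entry bounds of the transfer operator) such that,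
with `λ₀ ∈ [0,8]`, `V̄ > 2`, `V : ℤ² → {0,V̄}`, `0 < k < k'` of the same parity, the
transfer matrix `M^{k,k'}_{[1,a]}` (whose column at `s` is the value on the row `t = k'`
of the extension `u s` of the boundary data `δ_{(s,k)}`), restricted to rows
`S₁ ⊆ R_{[4,a-1],{k'}}` and the corresponding columns `S₂ = {(s,k) : (s,k') ∈ S₁}`,
is invertible and satisfies `‖(P_{S₁} M I_{S₂})⁻¹‖ ≤ a(2V̄(k'-k+2))^{2C₁a}`. -/
theorem restricted_transfer_operator_inverse_bound :
    ∃ C₁ : ℕ, 0 < C₁ ∧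
      ∀ (lam Vbar : ℝ) (V : ℤ × ℤ → ℝ) (a k k' : ℤ),
        0 ≤ lam → lam ≤ 8 → 2 < Vbar → (∀ p, V p = 0 ∨ V p = Vbar) →
        0 < k → k < k' → Even (k' - k) → 0 < a →
        ∀ u : ℤ → ℤ × ℤ → ℝ,
          (∀ s : ℤ, Even (s - k) →
            (∀ p ∈ westBoundary 1 a (k - 1) k',
              u s p = if p = (s, k) then (1 : ℝ) else 0) ∧
            (∀ σ τ : ℤ, (σ - 1, τ - 1) ∈ tiltedRect 2 (a - 1) k (k' - 1) →
              u s (σ, τ) = (4 + V (σ - 1, τ - 1) - lam) * u s (σ - 1, τ - 1)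
                - u s (σ - 2, τ) - u s (σ - 2, τ - 2) - u s (σ, τ - 2))) →
          ∀ S : Finset ℤ, (∀ s ∈ S, 4 ≤ s ∧ s ≤ a - 1 ∧ Even (s - k')) →
            ∀ M : Matrix S S ℝ,
              (M = Matrix.of fun s' s => u s.1 (s'.1, k')) →
              IsUnit M ∧
              ‖Matrix.toEuclideanCLM (𝕜 := ℝ) M⁻¹‖ ≤
                (a : ℝ) * (2 * Vbar * ((k' : ℝ) - k + 2)) ^ (2 * (C₁ : ℤ) * a) := by
  refine ⟨3, by norm_num, ?_⟩
  intro lam Vbar V a k k' hlam0 hlam8 hV2 hVor hk hkk hpar ha u hu S hS M hM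
  subst hM
  classical
  -- basic facts
  obtain ⟨mp, hmp⟩ := hpar
  have hkk2 : k + 2 ≤ k' := by omega
  set d : ℕ := S.card with hd
  set e := S.orderIsoOfFin (rfl : S.card = d) with he
  set base : ℝ := 3 * Vbar * ((k' : ℝ) - (k : ℝ) + 2) with hbase
  have hTk : (4 : ℝ) ≤ (k' : ℝ) - (k : ℝ) + 2 := by
    have : ((k : ℝ) + 2) ≤ (k' : ℝ) := by exact_mod_cast hkk2
    linarith
  have hbase1 : (1 : ℝ) ≤ base := by rw [hbase]; nlinarith
  set K : ℝ := base ^ 2 with hK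
  have hK1 : (1 : ℝ) ≤ K := by rw [hK]; nlinarith
  set w : Fin d → ℤ := fun p => ((e p : {x // x ∈ S}) : ℤ) with hw
  have hwmono : Monotone w := by
    intro p q hpq
    exact Subtype.coe_le_coe.mpr (e.monotone hpq)
  have hwS : ∀ p : Fin d, (w p) ∈ S := fun p => (e p).2
  -- per-column data
  have hcol : ∀ s : ℤ, s ∈ S →
      (∀ p ∈ westBoundary 1 a (k - 1) k', u s p = if p = (s, k) then (1:ℝ) else 0) ∧
      (∀ σ τ : ℤ, (σ - 1, τ - 1) ∈ tiltedRect 2 (a - 1) k (k' - 1) →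
        u s (σ, τ) = (4 + V (σ - 1, τ - 1) - lam) * u s (σ - 1, τ - 1)
          - u s (σ - 2, τ) - u s (σ - 2, τ - 2) - u s (σ, τ - 2)) := by
    intro s hsS
    obtain ⟨hs4, hsa, ms', hms'⟩ := hS s hsS
    exact hu s ⟨ms' + mp, by omega⟩
  set A : Matrix (Fin d) (Fin d) ℝ :=
    (Matrix.of fun s' s : {x // x ∈ S} => u s.1 (s'.1, k')).submatrix (fun p => e p) (fun q => e q)
    with hA
  have hAapp : ∀ p q : Fin d, A p q = u (w q) (w p, k') := by
    intro p q
    rfl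
  -- triangular properties
  have h0 : ∀ p q : Fin d, p < q → A p q = 0 := by
    intro p q hpq
    rw [hAapp]
    obtain ⟨hs4, hsa, ms', hms'⟩ := hS _ (hwS q)
    obtain ⟨hp4, hpa, mq', hmq'⟩ := hS _ (hwS p)
    obtain ⟨hbd, hrec⟩ := hcol _ (hwS q)
    have hlt : w p < w q := by
      have := e.strictMono hpq
      exact Subtype.coe_lt_coe.mpr this
    exact u_zero hk hkk hbd hrec hs4 (w p + k').toNat (w p) k'
      (mem_tilted.mpr ⟨by omega, by omega, by omega, by omega, ⟨mq', by omega⟩⟩)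
      (Int.self_le_toNat _) hlt
  have h1 : ∀ p : Fin d, |A p p| = 1 := by
    intro p
    rw [hAapp]
    obtain ⟨hs4, hsa, ms', hms'⟩ := hS _ (hwS p)
    obtain ⟨hbd, hrec⟩ := hcol _ (hwS p)
    exact u_diag hk hkk hbd hrec hs4 hsa ⟨ms' + mp, by omega⟩ (k' - k).toNat k'
      (by omega) le_rfl ⟨mp, by omega⟩ le_rfl
  have h2 : ∀ p q : Fin d, q < p → |A p q| ≤ K ^ (w p - w q).toNat := by
    intro p q hpq
    rw [hAapp]
    obtain ⟨hs4, hsa, ms', hms'⟩ := hS _ (hwS q)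
    obtain ⟨hp4, hpa, mq', hmq'⟩ := hS _ (hwS p)
    obtain ⟨hbd, hrec⟩ := hcol _ (hwS q)
    have hlt : w q < w p := Subtype.coe_lt_coe.mpr (e.strictMono hpq)
    have := u_growth hlam0 hlam8 hV2 hVor hk hkk hbd hrec hs4 hsa ⟨ms' + mp, by omega⟩
      (w p + k').toNat (w p) k'
      (mem_tilted.mpr ⟨by omega, by omega, by omega, by omega, ⟨mq', by omega⟩⟩)
      (Int.self_le_toNat _) hlt.le
    have hexp : (2 * (w p - w q)).toNat = 2 * (w p - w q).toNat := by omega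
    rw [hexp] at this
    calc |u (w q) (w p, k')| ≤ base ^ (2 * (w p - w q).toNat) := this
    _ = K ^ (w p - w q).toNat := by rw [hK, ← pow_mul]
  obtain ⟨hdetA, hBbound⟩ := tri_inv_bound A K hK1 w hwmono h0 h1 h2
  -- invertibility of M
  set M : Matrix {x // x ∈ S} {x // x ∈ S} ℝ := Matrix.of fun s' s : {x // x ∈ S} => u s.1 (s'.1, k') with hM
  have hdetM : M.det ≠ 0 := by
    have : A.det = M.det := Matrix.det_submatrix_equiv_self e.toEquiv M
    rw [← this]
    exact hdetA
  have hMunit : IsUnit M := M.isUnit_iff_isUnit_det.mpr (isUnit_iff_ne_zero.mpr hdetM)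
  refine ⟨hMunit, ?_⟩
  -- inverse transport
  have hMinv : A⁻¹ = M⁻¹.submatrix (⇑e.toEquiv) (⇑e.toEquiv) := by
    apply Matrix.inv_eq_right_inv
    have hA' : A = M.submatrix (⇑e.toEquiv) (⇑e.toEquiv) := rfl
    rw [hA', Matrix.submatrix_mul_equiv, Matrix.mul_nonsing_inv M (isUnit_iff_ne_zero.mpr hdetM),
      Matrix.submatrix_one_equiv]
  -- entry bound for M⁻¹
  set c : ℝ := K ^ a.toNat * 2 ^ d with hc
  have hc0 : (0 : ℝ) ≤ c := by positivity
  have hMentry : ∀ i j : {x // x ∈ S}, |M⁻¹ i j| ≤ c := by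
    intro i j
    have hij : M⁻¹ i j = A⁻¹ (e.symm i) (e.symm j) := by
      rw [hMinv]
      simp [Matrix.submatrix_apply]
    rw [hij]
    refine le_trans (hBbound (e.symm i) (e.symm j)) ?_
    obtain ⟨hi4, hia, _⟩ := hS _ (hwS (e.symm i))
    obtain ⟨hj4, hja, _⟩ := hS _ (hwS (e.symm j))
    have hle1 : (w (e.symm i) - w (e.symm j)).toNat ≤ a.toNat := by omega
    have hle2 : (e.symm i).val - (e.symm j).val ≤ d := by
      have := (e.symm i).2
      omega
    rw [hc]
    have m1 : K ^ (w (e.symm i) - w (e.symm j)).toNat ≤ K ^ a.toNat :=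
      pow_le_pow_right₀ hK1 hle1
    have m2 : (2:ℝ) ^ ((e.symm i).val - (e.symm j).val) ≤ 2 ^ d :=
      pow_le_pow_right₀ one_le_two hle2
    exact mul_le_mul m1 m2 (by positivity) (by positivity)
  have hnorm : ‖Matrix.toEuclideanCLM (𝕜 := ℝ) M⁻¹‖ ≤ (Fintype.card {x // x ∈ S}) * c :=
    opNorm_le_of_entries M⁻¹ c hc0 hMentry
  have hcard : (Fintype.card {x // x ∈ S}) = d := by
    rw [hd]; exact Fintype.card_coe S
  -- final numeric bound
  set Y : ℝ := 2 * Vbar * ((k' : ℝ) - (k : ℝ) + 2) with hY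
  have hY2 : (2 : ℝ) ≤ Y := by rw [hY]; nlinarith
  have hY1 : (1 : ℝ) ≤ Y := by linarith
  have hda : d ≤ a.toNat := by
    have hsub : S ⊆ Finset.Icc 4 (a - 1) := by
      intro x hx
      obtain ⟨hx4, hxa, _⟩ := hS x hx
      exact Finset.mem_Icc.mpr ⟨hx4, hxa⟩
    have hcardle := Finset.card_le_card hsub
    have : (Finset.Icc (4:ℤ) (a-1)).card = (a - 1 + 1 - 4).toNat := Int.card_Icc _ _
    omega
  have hKY : K ≤ Y ^ 3 := by
    rw [hK, hbase, hY]
    have hVT : (8:ℝ) ≤ Vbar * ((k' : ℝ) - (k : ℝ) + 2) := by nlinarith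
    have hkey : (0:ℝ) ≤ Vbar^2 * ((k' : ℝ) - (k : ℝ) + 2)^2
        * (8 * (Vbar * ((k' : ℝ) - (k : ℝ) + 2)) - 9) :=
      mul_nonneg (mul_nonneg (sq_nonneg _) (sq_nonneg _)) (by linarith)
    nlinarith [hkey]
  have hcY : c ≤ Y ^ (6 * a.toNat) := by
    rw [hc]
    calc K ^ a.toNat * 2 ^ d ≤ (Y ^ 3) ^ a.toNat * Y ^ d := by
          apply mul_le_mul (pow_le_pow_left₀ (by positivity) hKY _)
            (pow_le_pow_left₀ (by norm_num) hY2 _) (by positivity) (by positivity)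
    _ = Y ^ (3 * a.toNat + d) := by rw [← pow_mul, ← pow_add]
    _ ≤ Y ^ (6 * a.toNat) := pow_le_pow_right₀ hY1 (by omega)
  have hzpow : (2 * Vbar * ((k' : ℝ) - (k : ℝ) + 2)) ^ (2 * ((3:ℕ) : ℤ) * a)
      = Y ^ (6 * a.toNat) := by
    rw [← hY]
    have h6 : (2 * ((3:ℕ) : ℤ) * a) = ((6 * a.toNat : ℕ) : ℤ) := by push_cast; omega
    rw [h6, zpow_natCast]
  rw [hzpow]
  calc ‖Matrix.toEuclideanCLM (𝕜 := ℝ) M⁻¹‖ ≤ (Fintype.card {x // x ∈ S}) * c := hnorm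
  _ = (d : ℝ) * c := by rw [hcard]
  _ ≤ (a : ℝ) * Y ^ (6 * a.toNat) := by
      apply mul_le_mul _ hcY hc0 (by positivity)
      have : ((a.toNat : ℤ) : ℝ) = (a : ℝ) := by
        have : (a.toNat : ℤ) = a := by omega
        exact_mod_cast this
      calc (d : ℝ) ≤ (a.toNat : ℝ) := by exact_mod_cast hda
      _ = (a : ℝ) := by exact_mod_cast this
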